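/- (Borel-type lemma; polynomial-data case of Lemma 3.7.) Let m ≥ 1, let g₀, g₁, …, g_N : ℂᵐ → ℂ be polynomial functions such that gⱼ − gₖ is non-constant for all 0 ≤ j < k ≤ N, and let a₀, a₁, …, a_N : ℂᵐ → ℂ be polynomial functions. If a₀(z)·exp(g₀(z)) + a₁(z)·exp(g₁(z)) + ⋯ + a_N(z)·exp(g_N(z)) = 0 for all z ∈ ℂᵐ, then aⱼ ≡ 0 for every j = 0, 1, …, N. -/

import Mathlib

open Complex Polynomial

noncomputable def TT (Q A : Polynomial ℂ) : Polynomial ℂ :=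
  Polynomial.derivative A + A * Polynomial.derivative Q

lemma TT_ne_zero {Q A : Polynomial ℂ} (hQ : Polynomial.derivative Q ≠ 0) (hA : A ≠ 0) :
    TT Q A ≠ 0 := by
  have hB : A * Polynomial.derivative Q ≠ 0 := mul_ne_zero hA hQ
  by_cases hA' : Polynomial.derivative A = 0
  · simp [TT, hA', hB]
  · have hdA : A.natDegree ≠ 0 := by
      intro h0
      exact hA' (by
        rw [Polynomial.eq_C_of_natDegree_eq_zero h0]; simp)
    have h1 : (Polynomial.derivative A).natDegree < A.natDegree :=
      Polynomial.natDegree_derivative_lt hdA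
    have h2 : (A * Polynomial.derivative Q).natDegree = A.natDegree + (Polynomial.derivative Q).natDegree :=
      Polynomial.natDegree_mul hA hQ
    intro h
    have hn : Polynomial.derivative A = -(A * Polynomial.derivative Q) := by
      rw [eq_neg_iff_add_eq_zero]; exact h
    have := congrArg Polynomial.natDegree hn
    rw [Polynomial.natDegree_neg, h2] at this
    omega

lemma TT_iter_ne_zero {Q A : Polynomial ℂ} (hQ : Polynomial.derivative Q ≠ 0) (hA : A ≠ 0)
    (n : ℕ) : (TT Q)^[n] A ≠ 0 := by
  induction n with
  | zero => simpa
  | succ n ih => rw [Function.iterate_succ_apply']; exact TT_ne_zero hQ ih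

lemma step {n : ℕ} (A G : Fin n → Polynomial ℂ)
    (h : ∀ t, ∑ j, (A j).eval t * Complex.exp ((G j).eval t) = 0) (t : ℂ) :
    ∑ j, (TT (G j) (A j)).eval t * Complex.exp ((G j).eval t) = 0 := by
  have hd : ∀ j : Fin n, HasDerivAt (fun s => (A j).eval s * Complex.exp ((G j).eval s))
      ((TT (G j) (A j)).eval t * Complex.exp ((G j).eval t)) t := by
    intro j
    have h1 := (A j).hasDerivAt t
    have h2 := ((G j).hasDerivAt t).cexp
    have h3 := h1.fun_mul h2
    refine h3.congr_deriv ?_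
    simp only [TT, Polynomial.eval_add, Polynomial.eval_mul]
    ring
  have hsum : HasDerivAt (fun s => ∑ j, (A j).eval s * Complex.exp ((G j).eval s))
      (∑ j, (TT (G j) (A j)).eval t * Complex.exp ((G j).eval t)) t :=
    HasDerivAt.fun_sum (fun j _ => hd j)
  have hz : (fun s => ∑ j, (A j).eval s * Complex.exp ((G j).eval s)) = fun _ => (0:ℂ) :=
    funext h
  rw [hz] at hsum
  exact hsum.unique (hasDerivAt_const t 0)

lemma step_iter {n : ℕ} (A G : Fin n → Polynomial ℂ)
    (h : ∀ t, ∑ j, (A j).eval t * Complex.exp ((G j).eval t) = 0) (k : ℕ) :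
    ∀ t, ∑ j, ((TT (G j))^[k] (A j)).eval t * Complex.exp ((G j).eval t) = 0 := by
  induction k with
  | zero => simpa
  | succ k ih =>
      intro t
      have := step (fun j => (TT (G j))^[k] (A j)) G ih t
      simpa [Function.iterate_succ_apply'] using this

lemma onevar : ∀ (N : ℕ) (A G : Fin (N+1) → Polynomial ℂ),
    (∀ j k : Fin (N+1), j < k → Polynomial.derivative (G j - G k) ≠ 0) →
    (∀ t, ∑ j, (A j).eval t * Complex.exp ((G j).eval t) = 0) →
    ∀ j, A j = 0 := by
  intro N
  induction N with
  | zero =>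
      intro A G _ h j
      have hj : j = 0 := by ext; omega
      subst hj
      apply Polynomial.funext
      intro t
      have := h t
      simp only [Fin.sum_univ_succ, Finset.univ_eq_empty, Finset.sum_empty, add_zero] at this
      have he := Complex.exp_ne_zero ((G 0).eval t)
      simpa [he] using mul_eq_zero.mp this
  | succ N ih =>
      intro A G hG h
      set L : Fin (N+2) := Fin.last (N+1) with hL
      have h2 : ∀ t, ∑ j, (A j).eval t * Complex.exp ((G j - G L).eval t) = 0 := by
        intro t
        have key : ∑ j, (A j).eval t * Complex.exp ((G j - G L).eval t)
            = (∑ j, (A j).eval t * Complex.exp ((G j).eval t)) * Complex.exp (-(G L).eval t) := by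
          rw [Finset.sum_mul]
          refine Finset.sum_congr rfl fun j _ => ?_
          rw [Polynomial.eval_sub, sub_eq_add_neg, Complex.exp_add]
          ring
        rw [key, h t, zero_mul]
      set d := (A L).natDegree with hd
      set B : Fin (N+2) → Polynomial ℂ := fun j => (TT (G j - G L))^[d+1] (A j) with hB
      have h3 : ∀ t, ∑ j, (B j).eval t * Complex.exp ((G j - G L).eval t) = 0 :=
        step_iter A (fun j => G j - G L) h2 (d+1)
      have hTT0 : TT (G L - G L) = fun p => Polynomial.derivative p := by
        funext p; simp [TT]
      have hBL : B L = 0 := by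
        rw [hB]
        simp only [hTT0]
        exact Polynomial.iterate_derivative_eq_zero (by omega)
      have h4 : ∀ t, ∑ j : Fin (N+1), (B j.castSucc).eval t *
          Complex.exp ((G j.castSucc - G L).eval t) = 0 := by
        intro t
        have := h3 t
        rw [Fin.sum_univ_castSucc] at this
        simpa [← hL, hBL] using this
      have hG' : ∀ j k : Fin (N+1), j < k →
          Polynomial.derivative ((G j.castSucc - G L) - (G k.castSucc - G L)) ≠ 0 := by
        intro j k hjk
        have e : (G j.castSucc - G L) - (G k.castSucc - G L) = G j.castSucc - G k.castSucc := by
          ring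
        rw [e]
        exact hG _ _ (by simpa using hjk)
      have hB0 : ∀ j : Fin (N+1), B j.castSucc = 0 :=
        ih (fun j => B j.castSucc) (fun j => G j.castSucc - G L) hG' h4
      have hA0 : ∀ j : Fin (N+1), A j.castSucc = 0 := by
        intro j
        by_contra hne
        have hder : Polynomial.derivative (G j.castSucc - G L) ≠ 0 :=
          hG j.castSucc L (Fin.castSucc_lt_last j)
        exact TT_iter_ne_zero hder hne (d+1) (hB0 j)
      have hALt : ∀ t, (A L).eval t = 0 := by
        intro t
        have := h t
        rw [Fin.sum_univ_castSucc] at this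
        simp only [hA0, Polynomial.eval_zero, zero_mul, Finset.sum_const_zero, zero_add] at this
        have he := Complex.exp_ne_zero ((G L).eval t)
        simpa [he] using mul_eq_zero.mp this
      have hAL : A L = 0 := Polynomial.funext (by simpa using hALt)
      intro j
      rcases Fin.eq_castSucc_or_eq_last j with ⟨i, rfl⟩ | rfl
      · exact hA0 i
      · exact hAL

lemma eval_line (m : ℕ) (z0 v : Fin m → ℂ) (p : MvPolynomial (Fin m) ℂ) (t : ℂ) :
    Polynomial.eval t
      (MvPolynomial.aeval (fun i => Polynomial.C (z0 i) + Polynomial.C (v i) * Polynomial.X) p)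
      = MvPolynomial.eval (fun i => z0 i + v i * t) p := by
  induction p using MvPolynomial.induction_on with
  | C c => simp
  | add p q hp hq => simp [hp, hq]
  | mul_X p i hp => simp [hp]

lemma eval_opt (m : ℕ) (z0 : Fin m → ℂ) (p : MvPolynomial (Fin m) ℂ)
    (u : Option (Fin m) → ℂ) :
    MvPolynomial.eval u
      (MvPolynomial.aeval
        (fun i => MvPolynomial.C (z0 i) +
          MvPolynomial.X (Option.some i) * MvPolynomial.X (none : Option (Fin m))) p)
      = MvPolynomial.eval (fun i => z0 i + u (some i) * u none) p := by
  induction p using MvPolynomial.induction_on with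
  | C c => simp
  | add p q hp hq => simp only [map_add, hp, hq]
  | mul_X p i hp =>
      simp only [map_mul, MvPolynomial.aeval_X, map_add, MvPolynomial.eval_C,
        MvPolynomial.eval_X, MvPolynomial.eval_mul, MvPolynomial.eval_add, hp]

lemma good_dir (m : ℕ) {ι : Type} [Fintype ι] (z0 : Fin m → ℂ)
    (q : ι → MvPolynomial (Fin m) ℂ)
    (hq : ∀ s, ∃ w, MvPolynomial.eval w (q s) ≠ MvPolynomial.eval z0 (q s)) :
    ∃ v : Fin m → ℂ, ∀ s, ∃ t : ℂ,
      MvPolynomial.eval (fun i => z0 i + v i * t) (q s) ≠ MvPolynomial.eval z0 (q s) := by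
  set ρ : MvPolynomial (Fin m) ℂ →ₐ[ℂ] MvPolynomial (Option (Fin m)) ℂ :=
    MvPolynomial.aeval
      (fun i => MvPolynomial.C (z0 i) +
        MvPolynomial.X (Option.some i) * MvPolynomial.X (none : Option (Fin m))) with hρ
  set Q : ι → MvPolynomial (Option (Fin m)) ℂ :=
    fun s => ρ (q s) - MvPolynomial.C (MvPolynomial.eval z0 (q s)) with hQ
  have hQne : ∀ s, Q s ≠ 0 := by
    intro s hzero
    obtain ⟨w, hw⟩ := hq s
    set u : Option (Fin m) → ℂ := fun o => o.elim 1 (fun i => w i - z0 i) with hu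
    have := congrArg (MvPolynomial.eval u) hzero
    rw [hQ] at this
    simp only [map_sub, MvPolynomial.eval_C, map_zero] at this
    rw [hρ, eval_opt] at this
    have he : (fun i => z0 i + u (some i) * u none) = w := by
      funext i; simp [hu]
    rw [he] at this
    exact hw (sub_eq_zero.mp this)
  by_contra hcon
  push_neg at hcon
  have hall : ∀ u : Option (Fin m) → ℂ, MvPolynomial.eval u (∏ s, Q s) = 0 := by
    intro u
    obtain ⟨s, hs⟩ := hcon (fun i => u (some i))
    rw [map_prod]
    apply Finset.prod_eq_zero (Finset.mem_univ s)
    rw [hQ]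
    simp only [map_sub, MvPolynomial.eval_C]
    rw [hρ, eval_opt]
    rw [hs (u none)]
    ring
  have : (∏ s, Q s) = 0 := MvPolynomial.funext (by simpa using hall)
  exact (Finset.prod_ne_zero_iff.mpr (fun s _ => hQne s)) this

lemma deriv_ne {P : Polynomial ℂ} {t : ℂ} (h : P.eval t ≠ P.eval 0) :
    Polynomial.derivative P ≠ 0 := by
  intro h0
  have := Polynomial.eq_C_of_derivative_eq_zero h0
  apply h
  rw [this]; simp

set_option maxHeartbeats 1000000 in
/-- Borel-type lemma (polynomial-data case): if the polynomial exponents have pairwise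
non-constant differences and ∑ aⱼ e^{gⱼ} ≡ 0 with polynomial coefficients aⱼ, then every
aⱼ vanishes identically. -/
theorem stmt_3 (m : ℕ) (hm : 1 ≤ m) (N : ℕ)
    (g a : Fin (N + 1) → ((Fin m → ℂ) → ℂ))
    (hg : ∀ j, ∃ p : MvPolynomial (Fin m) ℂ, ∀ z, g j z = MvPolynomial.eval z p)
    (ha : ∀ j, ∃ p : MvPolynomial (Fin m) ℂ, ∀ z, a j z = MvPolynomial.eval z p)
    (hdiff : ∀ j k : Fin (N + 1), j < k → ¬ ∃ w : ℂ, ∀ z, g j z - g k z = w)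
    (heq : ∀ z, ∑ j, a j z * Complex.exp (g j z) = 0) :
    ∀ j, ∀ z, a j z = 0 := by
  choose pg hpg using hg
  choose pa hpa using ha
  intro j z0
  have hq : ∀ s : {jk : Fin (N+1) × Fin (N+1) // jk.1 < jk.2}, ∃ w,
      MvPolynomial.eval w (pg s.1.1 - pg s.1.2) ≠ MvPolynomial.eval z0 (pg s.1.1 - pg s.1.2) := by
    intro s
    by_contra hc
    push_neg at hc
    refine hdiff s.1.1 s.1.2 s.2 ⟨MvPolynomial.eval z0 (pg s.1.1 - pg s.1.2), fun z => ?_⟩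
    rw [hpg, hpg, ← map_sub (MvPolynomial.eval z)]
    exact hc z
  set q : {jk : Fin (N+1) × Fin (N+1) // jk.1 < jk.2} → MvPolynomial (Fin m) ℂ :=
    fun s => pg s.1.1 - pg s.1.2 with hqdef
  obtain ⟨v, hv⟩ := good_dir m z0 q hq
  set φ : MvPolynomial (Fin m) ℂ →ₐ[ℂ] Polynomial ℂ :=
    MvPolynomial.aeval (fun i => Polynomial.C (z0 i) + Polynomial.C (v i) * Polynomial.X) with hφ
  have hline : ∀ (p : MvPolynomial (Fin m) ℂ) (t : ℂ),
      (φ p).eval t = MvPolynomial.eval (fun i => z0 i + v i * t) p := by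
    intro p t; rw [hφ]; exact eval_line m z0 v p t
  have hline0 : ∀ p : MvPolynomial (Fin m) ℂ, (φ p).eval 0 = MvPolynomial.eval z0 p := by
    intro p
    rw [hline]
    have hz : (fun i => z0 i + v i * 0) = z0 := by funext i; ring
    rw [hz]
  have hGder : ∀ j k : Fin (N+1), j < k →
      Polynomial.derivative (φ (pg j) - φ (pg k)) ≠ 0 := by
    intro j k hjk
    obtain ⟨t, ht⟩ := hv ⟨(j, k), hjk⟩
    rw [hqdef] at ht
    have hPt : φ (pg j) - φ (pg k) = φ (pg j - pg k) := (map_sub φ _ _).symm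
    rw [hPt]
    refine deriv_ne (t := t) ?_
    rw [hline, hline0]
    exact ht
  have hsum : ∀ t, ∑ i, (φ (pa i)).eval t * Complex.exp ((φ (pg i)).eval t) = 0 := by
    intro t
    have h0 := heq (fun i => z0 i + v i * t)
    rw [← h0]
    refine Finset.sum_congr rfl fun i _ => ?_
    rw [hline, hline, ← hpa, ← hpg]
  have hA := onevar N (fun i => φ (pa i)) (fun i => φ (pg i)) hGder hsum
  have h1 := congrArg (Polynomial.eval 0) (hA j)
  rw [hline0] at h1
  rw [hpa]
  simpa using h1
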